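/- Let a, b > 0 with a/b irrational, and for a word w in {s_a, s_b}* define Δ(w) = |w|_{s_a}·a − |w|_{s_b}·b. Then for any p ≥ 0 there exists a word w* ∈ L = {s_a^i s_b^j : a·i − b·j ≥ 0} with |w*| > p such that Δ(w*) < Δ(w) for all w ∈ L with |w| < |w*|. -/

import Mathlib

/-- Final (signed) distance to the half-plane boundary of a word over the alphabet
`{s_a, s_b}`, where `s_a` (encoded `true`) has weight `a` and `s_b` (encoded
`false`) has weight `-b`. -/
noncomputable def Δ (a b : ℝ) (w : List Bool) : ℝ :=
  (w.count true : ℝ) * a - (w.count false : ℝ) * b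

lemma delta_eq (a b : ℝ) (i j : ℕ) :
    Δ a b (List.replicate i true ++ List.replicate j false) = a * i - b * j := by
  simp [Δ, List.count_append, List.count_replicate]
  ring

lemma delta_pos {a b : ℝ} (ha : 0 < a) (hb : 0 < b) (hir : Irrational (a / b))
    {i j : ℕ} (hne : ¬(i = 0 ∧ j = 0)) (hge : 0 ≤ a * i - b * j) :
    0 < a * i - b * j := by
  rcases hge.lt_or_eq with h | h
  · exact h
  exfalso
  have heq : a * i = b * j := by linarith
  rcases Nat.eq_zero_or_pos i with hi | hi
  · subst hi
    simp at heq
    rcases heq with h' | h'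
    · exact hb.ne' h'
    · exact hne ⟨rfl, by exact_mod_cast (Nat.cast_eq_zero).mp h'⟩
  · apply hir
    refine ⟨(j : ℚ) / (i : ℚ), ?_⟩
    have hi' : (0:ℝ) < (i:ℝ) := by exact_mod_cast hi
    push_cast
    rw [div_eq_div_iff hi'.ne' hb.ne'] at *
    · nlinarith [heq]

lemma delta_small {a b : ℝ} (ha : 0 < a) (hb : 0 < b) (hir : Irrational (a / b))
    {ε : ℝ} (hε : 0 < ε) :
    ∃ i j : ℕ, i ≠ 0 ∧ 0 < a * i - b * j ∧ a * i - b * j < ε := by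
  set ξ := a / b with hξdef
  have hξpos : 0 < ξ := div_pos ha hb
  -- choose N with b / (N+1) < ε
  obtain ⟨n, hn⟩ := exists_nat_gt (b / ε)
  set N := n + 1 with hNdef
  have hNpos : 0 < N := Nat.succ_pos n
  have hbN : b / (N + 1 : ℝ) < ε := by
    rw [div_lt_iff₀ (by positivity)]
    have : b / ε < (N:ℝ) + 1 := by
      have : (n:ℝ) ≤ (N:ℝ) := by exact_mod_cast Nat.le_succ n
      linarith
    calc b = (b / ε) * ε := by field_simp
    _ < ((N:ℝ) + 1) * ε := by
        apply mul_lt_mul_of_pos_right this hε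
    _ = ε * ((N:ℝ) + 1) := by ring
  obtain ⟨k, hk0, hkN, hk⟩ := Real.exists_nat_abs_mul_sub_round_le ξ hNpos
  set m : ℤ := round ((k:ℝ) * ξ) with hmdef
  set x : ℝ := k * a - m * b with hxdef
  have hxb : x = b * ((k:ℝ) * ξ - m) := by
    field_simp [hξdef, hxdef]
    rw [hxdef, hξdef]; field_simp
  have habs : |x| < ε := by
    rw [hxb, abs_mul, abs_of_pos hb]
    calc b * |(k:ℝ) * ξ - m| ≤ b * (1 / (N + 1)) := by
          apply mul_le_mul_of_nonneg_left hk hb.le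
    _ = b / (N + 1 : ℝ) := by ring
    _ < ε := hbN
  have hkξirr : Irrational ((k:ℝ) * ξ) := hir.natCast_mul hk0.ne'
  have hx0 : x ≠ 0 := by
    rw [hxb]
    refine mul_ne_zero hb.ne' (sub_ne_zero.mpr ?_)
    exact hkξirr.ne_int m
  rcases hx0.lt_or_gt with hneg | hpos
  · -- x < 0 : descent
    have hm1 : 0 < m := by
      have hka : 0 < (k:ℝ) * a := by positivity
      by_contra hm
      push_neg at hm
      have : (m:ℝ) * b ≤ 0 := mul_nonpos_of_nonpos_of_nonneg (by exact_mod_cast hm) hb.le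
      have : 0 < x := by rw [hxdef]; linarith
      linarith
    set j0 : ℕ := ⌊ξ⌋.toNat with hj0def
    have hfl : ((j0:ℤ):ℝ) = (⌊ξ⌋ : ℝ) := by
      rw [hj0def, Int.toNat_of_nonneg (Int.floor_nonneg.mpr hξpos.le)]
    set y : ℝ := a - j0 * b with hydef
    have hyfr : y = b * Int.fract ξ := by
      rw [hydef, Int.fract]
      have : (j0:ℝ) = (⌊ξ⌋ : ℝ) := by exact_mod_cast hfl
      rw [this]
      field_simp [hξdef]
      rw [mul_sub, show b * ξ = a by rw [hξdef]; field_simp]; ring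
    have hy0 : 0 < y := by
      rw [hyfr]
      refine mul_pos hb (Int.fract_pos.mpr ?_)
      exact hir.ne_int ⌊ξ⌋
    have harch : ∃ t : ℕ, y + ((t:ℝ) + 1) * x ≤ 0 := by
      obtain ⟨t, ht⟩ := exists_nat_gt (y / (-x))
      refine ⟨t, ?_⟩
      have hxn : 0 < -x := by linarith
      rw [div_lt_iff₀ hxn] at ht
      nlinarith
    classical
    set t := Nat.find harch with htdef
    have hle : y + ((t:ℝ) + 1) * x ≤ 0 := Nat.find_spec harch
    have hgt : 0 < y + (t:ℝ) * x := by
      rcases Nat.eq_zero_or_pos t with h0 | hpos'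
      · rw [h0]; simpa using hy0
      · have := Nat.find_min harch (m := t - 1) (by omega)
        push_neg at this
        have htt : ((t - 1 : ℕ) : ℝ) + 1 = (t : ℝ) := by
          have : (t - 1 : ℕ) + 1 = t := by omega
          exact_mod_cast congrArg (Nat.cast : ℕ → ℝ) this
        rw [htt] at this
        linarith
    refine ⟨1 + t * k, j0 + t * m.toNat, by omega, ?_, ?_⟩
    · have : a * (1 + t * k : ℕ) - b * (j0 + t * m.toNat : ℕ) = y + (t:ℝ) * x := by
        have hmtn : ((m.toNat : ℕ) : ℝ) = (m : ℝ) := by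
          exact_mod_cast Int.toNat_of_nonneg hm1.le
        push_cast [hmtn]
        rw [hydef, hxdef]
        ring
      rw [this]; exact hgt
    · have : a * (1 + t * k : ℕ) - b * (j0 + t * m.toNat : ℕ) = y + (t:ℝ) * x := by
        have hmtn : ((m.toNat : ℕ) : ℝ) = (m : ℝ) := by
          exact_mod_cast Int.toNat_of_nonneg hm1.le
        push_cast [hmtn]
        rw [hydef, hxdef]
        ring
      rw [this]
      have : -x < ε := by
        have := neg_abs_le x
        rw [abs_of_neg hneg] at habs
        linarith
      linarith
  · -- x > 0 : direct
    have hm0 : 0 ≤ m := by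
      rw [hmdef, round_eq]
      refine Int.floor_nonneg.mpr ?_
      have : 0 ≤ (k:ℝ) * ξ := mul_nonneg (Nat.cast_nonneg k) hξpos.le
      linarith
    refine ⟨k, m.toNat, hk0.ne', ?_, ?_⟩ <;>
    · have hmtn : ((m.toNat : ℕ) : ℝ) = (m : ℝ) := by
        exact_mod_cast Int.toNat_of_nonneg hm0
      have hval : a * (k:ℕ) - b * (m.toNat : ℕ) = x := by
        rw [hmtn, hxdef]; ring
      rw [hval]
      first
        | exact hpos
        | (rw [abs_of_pos hpos] at habs; exact habs)

/-- For any `p` there is a word `w* ∈ L = {s_a^i s_b^j : a·i − b·j ≥ 0}` of length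
`> p` whose final distance to the boundary is smaller than that of every shorter
nonempty word of `L`. -/
theorem stmt6 (a b : ℝ) (ha : 0 < a) (hb : 0 < b) (hir : Irrational (a / b))
    (p : ℕ) :
    ∃ w' ∈ {w : List Bool | ∃ i j : ℕ,
        w = List.replicate i true ++ List.replicate j false ∧ 0 ≤ a * i - b * j},
      p < w'.length ∧
      ∀ w ∈ {w : List Bool | ∃ i j : ℕ,
          w = List.replicate i true ++ List.replicate j false ∧ 0 ≤ a * i - b * j},
        w ≠ [] → w.length < w'.length → Δ a b w' < Δ a b w := by
  classical
  set L : Set (List Bool) := {w : List Bool | ∃ i j : ℕ,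
      w = List.replicate i true ++ List.replicate j false ∧ 0 ≤ a * i - b * j} with hLdef
  -- positivity of Δ on nonempty words of L
  have hpos : ∀ w ∈ L, w ≠ [] → 0 < Δ a b w := by
    rintro w ⟨i, j, rfl, hge⟩ hne
    rw [delta_eq]
    refine delta_pos ha hb hir ?_ hge
    rintro ⟨rfl, rfl⟩
    simp at hne
  -- the finite set of short nonempty words of L
  set S : Set (List Bool) := {w | w ∈ L ∧ w ≠ [] ∧ w.length ≤ p + 1} with hSdef
  have hSfin : S.Finite := (List.finite_length_le Bool (p + 1)).subset fun w hw => hw.2.2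
  have hSne : S.Nonempty := by
    refine ⟨[true], ⟨1, 0, by simp, by simp; linarith⟩, by simp, by simp⟩
  obtain ⟨w₀, hw₀S, hw₀min⟩ := Set.exists_min_image S (Δ a b) hSfin hSne
  set ε := Δ a b w₀ with hεdef
  have hε : 0 < ε := hpos w₀ hw₀S.1 hw₀S.2.1
  -- a word of L with small Δ
  obtain ⟨i, j, hi0, hval, hvε⟩ := delta_small ha hb hir hε
  set u : List Bool := List.replicate i true ++ List.replicate j false with hudef
  have huL : u ∈ L := ⟨i, j, rfl, hval.le⟩
  have huT : u ∈ L ∧ u ≠ [] ∧ Δ a b u < ε := by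
    refine ⟨huL, ?_, by rw [hudef, delta_eq]; exact hvε⟩
    rw [hudef]
    simp [hi0]
  set T : Set (List Bool) := {w | w ∈ L ∧ w ≠ [] ∧ Δ a b w < ε} with hTdef
  have hkey : ∃ n : ℕ, ∃ w ∈ T, w.length = n := ⟨u.length, u, huT, rfl⟩
  set n := Nat.find hkey with hndef
  obtain ⟨v, hvT, hvlen⟩ := Nat.find_spec hkey
  set T' : Set (List Bool) := {w | w ∈ T ∧ w.length = n} with hT'def
  have hT'fin : T'.Finite := (List.finite_length_eq Bool n).subset fun w hw => hw.2
  have hT'ne : T'.Nonempty := ⟨v, hvT, hvlen⟩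
  obtain ⟨w', hw'T', hw'min⟩ := Set.exists_min_image T' (Δ a b) hT'fin hT'ne
  have hw'len : w'.length = n := hw'T'.2
  have hw'ε : Δ a b w' < ε := hw'T'.1.2.2
  refine ⟨w', hw'T'.1.1, ?_, ?_⟩
  · -- p < w'.length
    by_contra hle
    push_neg at hle
    have : w' ∈ S := ⟨hw'T'.1.1, hw'T'.1.2.1, by omega⟩
    have := hw₀min w' this
    linarith
  · intro w hwL hwne hwlt
    by_cases hwε : Δ a b w < ε
    · -- w ∈ T with shorter length: contradicts minimality of n
      exfalso
      have : w ∈ T := ⟨hwL, hwne, hwε⟩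
      exact Nat.find_min hkey (m := w.length) (by omega) ⟨w, this, rfl⟩
    · push_neg at hwε
      linarith
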